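/- For every y with 0 < y < 2π and y ≠ π, the function G(y) = (4·tan(y/2)/cos²(y/2)) · ∫_{z=y/2}^{π/2} (π − z)·cos²(z) dz is differentiable at y, and 1 + G′(y) = −[(y² − 4πy + 3π² − 6)·cos(y) − 6·(y − 2π)·sin(y) − 2·(y² − 4πy + 3π² + 3)] / (8·cos⁴(y/2)). -/

import Mathlib

open Real

/-- The function whose derivative gives the Crofton area density. -/
noncomputable def croftonG (y : ℝ) : ℝ :=
  (4 * Real.tan (y / 2) / Real.cos (y / 2) ^ 2) *
    ∫ z in (y / 2)..(π / 2), (π - z) * Real.cos z ^ 2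

noncomputable def croftonF (z : ℝ) : ℝ :=
  π * z / 2 - z ^ 2 / 4 + (π - z) * Real.sin (2 * z) / 4 - Real.cos (2 * z) / 8

lemma hasDerivAt_croftonF (z : ℝ) :
    HasDerivAt croftonF ((π - z) * Real.cos z ^ 2) z := by
  have h2z : HasDerivAt (fun z : ℝ => 2 * z) 2 z := by
    simpa using (hasDerivAt_id z).const_mul 2
  have hsin : HasDerivAt (fun z : ℝ => Real.sin (2 * z)) (Real.cos (2 * z) * 2) z :=
    (Real.hasDerivAt_sin _).comp z h2z
  have hcos : HasDerivAt (fun z : ℝ => Real.cos (2 * z)) (-Real.sin (2 * z) * 2) z :=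
    (Real.hasDerivAt_cos _).comp z h2z
  have h1 : HasDerivAt (fun z : ℝ => π * z / 2) (π / 2) z := by
    simpa using ((hasDerivAt_id z).const_mul π).div_const 2
  have h2 : HasDerivAt (fun z : ℝ => z ^ 2 / 4) (2 * z / 4) z := by
    simpa using ((hasDerivAt_pow 2 z).div_const 4)
  have h3 : HasDerivAt (fun z : ℝ => (π - z) * Real.sin (2 * z) / 4)
      (((-1) * Real.sin (2 * z) + (π - z) * (Real.cos (2 * z) * 2)) / 4) z := by
    have hpz : HasDerivAt (fun z : ℝ => π - z) (-1) z := by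
      simpa using (hasDerivAt_id z).const_sub π |>.congr_deriv (by norm_num)
    exact (hpz.mul hsin).div_const 4
  have h4 : HasDerivAt (fun z : ℝ => Real.cos (2 * z) / 8) (-Real.sin (2 * z) * 2 / 8) z :=
    hcos.div_const 8
  have := ((h1.sub h2).add h3).sub h4
  refine HasDerivAt.congr_deriv (f := croftonF) this ?_
  have : Real.cos z ^ 2 = (1 + Real.cos (2 * z)) / 2 := by
    rw [Real.cos_two_mul]; ring
  rw [this]; ring

lemma crofton_integral (a : ℝ) :
    ∫ z in a..(π / 2), (π - z) * Real.cos z ^ 2 = croftonF (π / 2) - croftonF a := by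
  apply intervalIntegral.integral_eq_sub_of_hasDerivAt
  · exact fun z _ => hasDerivAt_croftonF z
  · apply Continuous.intervalIntegrable
    continuity

lemma croftonG_eq : croftonG = fun y =>
    (4 * Real.tan (y / 2) / Real.cos (y / 2) ^ 2) * (croftonF (π / 2) - croftonF (y / 2)) := by
  funext y
  rw [croftonG, crofton_integral]

/-- Differentiating the closed form of the conditional area probability yields
the Crofton density of the area of a random spherical triangle. -/
theorem crofton_density (y : ℝ) (h0 : 0 < y) (h1 : y < 2 * π) (h2 : y ≠ π) :
    DifferentiableAt ℝ croftonG y ∧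
    1 + deriv croftonG y =
      -(((y ^ 2 - 4 * π * y + 3 * π ^ 2 - 6) * Real.cos y -
          6 * (y - 2 * π) * Real.sin y -
          2 * (y ^ 2 - 4 * π * y + 3 * π ^ 2 + 3)) /
        (8 * Real.cos (y / 2) ^ 4)) := by
  have hpi := Real.pi_pos
  have hc : Real.cos (y / 2) ≠ 0 := by
    rcases lt_or_gt_of_ne h2 with h | h
    · exact ne_of_gt (Real.cos_pos_of_mem_Ioo ⟨by linarith, by linarith⟩)
    · exact ne_of_lt (Real.cos_neg_of_pi_div_two_lt_of_lt (by linarith) (by linarith))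
  set c := Real.cos (y / 2) with hcdef
  set s := Real.sin (y / 2) with hsdef
  have hhalf : HasDerivAt (fun y : ℝ => y / 2) (1 / 2) y := by
    simpa using (hasDerivAt_id y).div_const 2
  have htan : HasDerivAt (fun y : ℝ => Real.tan (y / 2)) (1 / c ^ 2 * (1 / 2)) y :=
    by exact (Real.hasDerivAt_tan (x := y / 2) hc).comp y hhalf
  have hcosh : HasDerivAt (fun y : ℝ => Real.cos (y / 2)) (-s * (1 / 2)) y :=
    (Real.hasDerivAt_cos _).comp y hhalf
  have hcsq : HasDerivAt (fun y : ℝ => Real.cos (y / 2) ^ 2)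
      (2 * c ^ 1 * (-s * (1 / 2))) y := hcosh.pow 2
  have hA : HasDerivAt (fun y : ℝ => 4 * Real.tan (y / 2) / Real.cos (y / 2) ^ 2)
      ((4 * (1 / c ^ 2 * (1 / 2)) * c ^ 2 -
        4 * Real.tan (y / 2) * (2 * c ^ 1 * (-s * (1 / 2)))) / (c ^ 2) ^ 2) y :=
    (htan.const_mul 4).div hcsq (pow_ne_zero 2 hc)
  have hB : HasDerivAt (fun y : ℝ => croftonF (π / 2) - croftonF (y / 2))
      (-((π - y / 2) * c ^ 2 * (1 / 2))) y := by
    simpa using (((hasDerivAt_croftonF (y / 2)).comp y hhalf).const_sub (croftonF (π / 2)))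
  have hG : HasDerivAt croftonG
      ((4 * (1 / c ^ 2 * (1 / 2)) * c ^ 2 -
        4 * Real.tan (y / 2) * (2 * c ^ 1 * (-s * (1 / 2)))) / (c ^ 2) ^ 2 *
        (croftonF (π / 2) - croftonF (y / 2)) +
       (4 * Real.tan (y / 2) / c ^ 2) * -((π - y / 2) * c ^ 2 * (1 / 2))) y := by
    rw [croftonG_eq]
    exact hA.mul hB
  refine ⟨hG.differentiableAt, ?_⟩
  rw [hG.deriv]
  have hF2 : croftonF (π / 2) = 3 * π ^ 2 / 16 + 1 / 8 := by
    rw [croftonF, show 2 * (π / 2) = π by ring, Real.sin_pi, Real.cos_pi]; ring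
  have hFy : croftonF (y / 2) =
      π * (y / 2) / 2 - (y / 2) ^ 2 / 4 + (π - y / 2) * Real.sin y / 4 - Real.cos y / 8 := by
    rw [croftonF, show 2 * (y / 2) = y by ring]
  have hcy : Real.cos y = 2 * c ^ 2 - 1 := by
    rw [show y = 2 * (y / 2) by ring, Real.cos_two_mul]
  have hsy : Real.sin y = 2 * s * c := by
    rw [show y = 2 * (y / 2) by ring, Real.sin_two_mul]
  have hpyth : s ^ 2 + c ^ 2 = 1 := Real.sin_sq_add_cos_sq (y / 2)
  rw [hF2, hFy, hcy, hsy, Real.tan_eq_sin_div_cos, ← hsdef, ← hcdef]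
  field_simp
  linear_combination 2 * (4 * 2 ^ 2 * (3 * π ^ 2 * 8 + 16) -
    16 * (8 * (y * (4 * π - y) + c * 2 ^ 2 * s * (2 * π - y)) - 4 * 2 ^ 2 * (c ^ 2 * 2 - 1))) * hpyth
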